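/- Let $p : A \to [0,1]$ be a probability distribution on a finite set $A$ with $|A| = K$, suppose $\hat\ell : A \to [0,\infty)$ satisfies $\sum_{i\in A} p(i)\hat\ell(i) \leq Ke$, let $d \geq 1$ be an integer, and let $0 < \eta \leq \frac{1}{Ke(d+1)}$. Define $p'(i) = p(i)e^{-\eta\hat\ell(i)} / \sum_j p(j)e^{-\eta\hat\ell(j)}$. Then $p'(i) \leq (1 + 1/d)\, p(i)$ for every $i \in A$. -/

import Mathlib

theorem stmt_2 {A : Type*} [Fintype A] [Nonempty A]
    (p lhat : A → ℝ) (η : ℝ) (d : ℕ) (K : ℕ)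
    (hK : K = Fintype.card A)
    (hp0 : ∀ i, 0 ≤ p i) (hp1 : ∑ i, p i = 1)
    (hl : ∀ i, 0 ≤ lhat i)
    (hsum : ∑ i, p i * lhat i ≤ K * Real.exp 1)
    (hd : 1 ≤ d)
    (hη0 : 0 < η) (hη : η ≤ 1 / (K * Real.exp 1 * (d + 1))) (i : A) :
    (p i * Real.exp (-η * lhat i)) / (∑ j, p j * Real.exp (-η * lhat j))
      ≤ (1 + 1 / (d : ℝ)) * p i := by
  have hd' : (1 : ℝ) ≤ (d : ℝ) := by exact_mod_cast hd
  have hdpos : (0 : ℝ) < d := by linarith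
  have hKpos : (0 : ℝ) < K := by
    have : 0 < Fintype.card A := Fintype.card_pos
    rw [hK]; exact_mod_cast this
  have hKe : (0 : ℝ) < K * Real.exp 1 := by positivity
  have hηKe : η * (K * Real.exp 1) ≤ 1 / (d + 1) := by
    have h1 : η * (K * Real.exp 1) ≤ 1 / (K * Real.exp 1 * (d + 1)) * (K * Real.exp 1) :=
      mul_le_mul_of_nonneg_right hη (le_of_lt hKe)
    have h2 : 1 / (K * Real.exp 1 * (d + 1)) * (K * Real.exp 1) = 1 / (d + 1) := by
      field_simp
    linarith
  set S := ∑ j, p j * Real.exp (-η * lhat j) with hSdef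
  have hS1 : 1 - η * ∑ j, p j * lhat j ≤ S := by
    have h : ∀ j ∈ Finset.univ, p j * (1 + (-η * lhat j)) ≤ p j * Real.exp (-η * lhat j) :=
      fun j _ => mul_le_mul_of_nonneg_left
        (by linarith [Real.add_one_le_exp (-η * lhat j)]) (hp0 j)
    have heq : ∑ j, p j * (1 + (-η * lhat j))
        = (∑ j, p j) - η * ∑ j, p j * lhat j := by
      rw [Finset.mul_sum, ← Finset.sum_sub_distrib]
      congr 1; ext j; ring
    have := Finset.sum_le_sum h
    rw [heq, hp1] at this
    exact this
  have hsum0 : 0 ≤ ∑ j, p j * lhat j :=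
    Finset.sum_nonneg fun j _ => mul_nonneg (hp0 j) (hl j)
  have hηsum : η * ∑ j, p j * lhat j ≤ 1 / (d + 1) := by
    have : η * ∑ j, p j * lhat j ≤ η * (K * Real.exp 1) :=
      mul_le_mul_of_nonneg_left hsum hη0.le
    linarith
  have hdd : (0 : ℝ) < (d : ℝ) / (d + 1) := by positivity
  have hS2 : (d : ℝ) / (d + 1) ≤ S := by
    have : 1 - 1 / ((d : ℝ) + 1) = (d : ℝ) / (d + 1) := by field_simp; ring
    linarith
  have hS0 : 0 < S := lt_of_lt_of_le hdd hS2
  rw [div_le_iff₀ hS0]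
  have hexp : Real.exp (-η * lhat i) ≤ 1 := by
    rw [Real.exp_le_one_iff]
    have := hl i
    nlinarith
  have hkey : ((1 : ℝ) + 1 / d) * ((d : ℝ) / (d + 1)) = 1 := by field_simp
  have h1 : p i * Real.exp (-η * lhat i) ≤ p i :=
    (mul_le_of_le_one_right (hp0 i) hexp)
  have h2 : p i ≤ (1 + 1 / (d : ℝ)) * p i * S := by
    have := mul_le_mul_of_nonneg_left hS2
      (mul_nonneg (by positivity : (0:ℝ) ≤ 1 + 1 / (d:ℝ)) (hp0 i))
    calc p i = (1 + 1 / (d : ℝ)) * p i * ((d : ℝ) / (d + 1)) := by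
          rw [mul_comm ((1:ℝ) + 1/d) (p i), mul_assoc, hkey, mul_one]
      _ ≤ (1 + 1 / (d : ℝ)) * p i * S := this
  linarith
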